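/- Let R be a commutative ring, G a finite group, P a finitely generated projective left RG-module, and M a left RG-module. The map τ : Hom_R(P,R) ⊗_{RG} M → Hom_{RG}(P,M) given by τ(f ⊗ m)(p) = Σ_{g∈G} f(g^{-1}p) g·m is an isomorphism of R-modules. -/

import Mathlib

open TensorProduct

/-- The action of a group element `g ∈ G` on a module `P` over the group algebra
`R[G]`, as an `R`-linear map. -/
noncomputable def gAct (R : Type*) [CommRing R] (G : Type*) [Group G] (P : Type*) [AddCommGroup P]
    [Module (MonoidAlgebra R G) P] [Module R P] [IsScalarTower R (MonoidAlgebra R G) P]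
    (g : G) : P →ₗ[R] P where
  toFun p := (MonoidAlgebra.single g (1 : R) : MonoidAlgebra R G) • p
  map_add' := by intro p q; exact smul_add _ p q
  map_smul' := by intro r p; exact (smul_comm r _ p).symm

/-- Dual basis lemma for f.g. projective modules. -/
theorem exists_dual_basis (A : Type*) [Ring A] (P : Type*) [AddCommGroup P] [Module A P]
    [Module.Projective A P] [Module.Finite A P] :
    ∃ (n : ℕ) (s : Fin n → P) (F : Fin n → (P →ₗ[A] A)),
      ∀ q : P, ∑ i, F i q • s i = q := by
  obtain ⟨n, s, hs⟩ := Module.Finite.exists_fin (R := A) (M := P)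
  let tot : (Fin n → A) →ₗ[A] P :=
    ∑ i, (LinearMap.toSpanSingleton A P (s i)).comp (LinearMap.proj i)
  have htot : ∀ v, tot v = ∑ i, v i • s i := by
    intro v; simp [tot, LinearMap.toSpanSingleton_apply]
  have hsurj : Function.Surjective tot := by
    rw [← LinearMap.range_eq_top, ← top_le_iff, ← hs, Submodule.span_le]
    rintro _ ⟨i, rfl⟩
    exact ⟨Pi.single i 1, by simp [htot, Pi.single_apply, ite_smul]⟩
  obtain ⟨σ, hσ⟩ := Module.projective_lifting_property tot LinearMap.id hsurj
  refine ⟨n, s, fun i => (LinearMap.proj i) ∘ₗ σ, fun q => ?_⟩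
  have := congrArg (fun (f : P →ₗ[A] P) => f q) hσ
  simpa [htot] using this

section Aux

variable (R : Type*) [CommRing R] (G : Type*) [Group G] [Fintype G]
variable (P : Type*) [AddCommGroup P] [Module (MonoidAlgebra R G) P] [Module R P]
    [IsScalarTower R (MonoidAlgebra R G) P]

theorem smul_decomp (a : MonoidAlgebra R G) (p : P) :
    a • p = ∑ g : G, a.coeff g • ((MonoidAlgebra.single g (1 : R) : MonoidAlgebra R G) • p) := by
  have h : a = ∑ g : G, MonoidAlgebra.single g (a.coeff g) := by
    rw [← Finsupp.sum_fintype a.coeff (fun g r => MonoidAlgebra.single g r)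
      (fun g => MonoidAlgebra.single_zero g)]
    exact (MonoidAlgebra.sum_coeff_single a).symm
  conv_lhs => rw [h]
  rw [Finset.sum_smul]
  refine Finset.sum_congr rfl fun g _ => ?_
  rw [← smul_assoc]
  congr 1
  simp [MonoidAlgebra.smul_single']

variable (M : Type*) [AddCommGroup M] [Module (MonoidAlgebra R G) M] [Module R M]
    [IsScalarTower R (MonoidAlgebra R G) M]

noncomputable def Bmap : (P →ₗ[R] R) →ₗ[R] M →ₗ[R] (P →ₗ[R] M) :=
  LinearMap.mk₂ R
    (fun f m => ∑ g : G, LinearMap.smulRight (f ∘ₗ gAct R G P g⁻¹)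
      ((MonoidAlgebra.single g (1 : R) : MonoidAlgebra R G) • m))
    (by intro f f' m; ext p
        simp [LinearMap.sum_apply, add_smul, Finset.sum_add_distrib])
    (by intro r f m; ext p
        simp [LinearMap.sum_apply, Finset.smul_sum, mul_smul])
    (by intro f m m'; ext p
        simp [LinearMap.sum_apply, smul_add, Finset.sum_add_distrib])
    (by intro r f m; ext p
        simp only [LinearMap.sum_apply, LinearMap.smulRight_apply, LinearMap.smul_apply,
          Finset.smul_sum]
        refine Finset.sum_congr rfl fun g _ => ?_
        rw [smul_comm (MonoidAlgebra.single g (1:R) : MonoidAlgebra R G) r m,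
          smul_comm _ r])

theorem Bmap_apply (f : P →ₗ[R] R) (m : M) (p : P) :
    Bmap R G P M f m p = ∑ g : G,
      f ((MonoidAlgebra.single g⁻¹ (1 : R) : MonoidAlgebra R G) • p) •
        ((MonoidAlgebra.single g (1 : R) : MonoidAlgebra R G) • m) := by
  simp [Bmap, LinearMap.sum_apply, gAct]

end Aux

section Aux2

variable (R : Type*) [CommRing R] (G : Type*) [Group G]

/-- Coefficient at `1` as an `R`-linear map. -/
noncomputable def coeff1 : MonoidAlgebra R G →ₗ[R] R where
  toFun a := a.coeff 1
  map_add' a b := Finsupp.add_apply a.coeff b.coeff 1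
  map_smul' r a := Finsupp.smul_apply r a.coeff 1

variable (P : Type*) [AddCommGroup P] [Module (MonoidAlgebra R G) P] [Module R P]
    [IsScalarTower R (MonoidAlgebra R G) P]

theorem single_smul_single (g h : G) (p : P) :
    (MonoidAlgebra.single g (1 : R) : MonoidAlgebra R G) •
      (MonoidAlgebra.single h (1 : R) : MonoidAlgebra R G) • p =
    (MonoidAlgebra.single (g * h) (1 : R) : MonoidAlgebra R G) • p := by
  rw [← mul_smul, MonoidAlgebra.single_mul_single, one_mul]

theorem coeff1_map (Fi : P →ₗ[MonoidAlgebra R G] MonoidAlgebra R G) (g : G) (p : P) :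
    coeff1 R G (Fi ((MonoidAlgebra.single g (1 : R) : MonoidAlgebra R G) • p)) =
      (Fi p).coeff g⁻¹ := by
  rw [map_smul, smul_eq_mul]
  show (MonoidAlgebra.single g (1 : R) * Fi p).coeff 1 = _
  rw [MonoidAlgebra.coeff_single_mul_apply, one_mul, mul_one]

end Aux2
/-- Let `P` be a finitely generated projective `R[G]`-module and `M` an `R[G]`-module.
The map `τ : Hom_R(P,R) ⊗_{R[G]} M → Hom_{R[G]}(P,M)`,
`τ(f ⊗ m)(p) = Σ_{g ∈ G} f(g⁻¹p) g·m`, is an isomorphism of `R`-modules.  Concretely: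
the `R`-linear map `T` on `Hom_R(P,R) ⊗_R M` given by the same formula takes values in
the `R[G]`-linear maps, hits every `R[G]`-linear map, and its kernel is exactly the span
of the relations `(f·g) ⊗ m - f ⊗ (g·m)` defining the tensor product over `R[G]`; hence
`T` descends to the desired isomorphism `τ`. -/
theorem duality_hom_tensor_iso (R : Type*) [CommRing R] (G : Type*) [Group G] [Fintype G]
    (P M : Type*) [AddCommGroup P] [Module (MonoidAlgebra R G) P] [Module R P]
    [IsScalarTower R (MonoidAlgebra R G) P] [Module.Projective (MonoidAlgebra R G) P]
    [Module.Finite (MonoidAlgebra R G) P]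
    [AddCommGroup M] [Module (MonoidAlgebra R G) M] [Module R M]
    [IsScalarTower R (MonoidAlgebra R G) M] :
    ∃ T : ((P →ₗ[R] R) ⊗[R] M) →ₗ[R] (P →ₗ[R] M),
      (∀ (f : P →ₗ[R] R) (m : M) (p : P),
        T (f ⊗ₜ m) p = ∑ g : G,
          f ((MonoidAlgebra.single g⁻¹ (1 : R) : MonoidAlgebra R G) • p) •
            ((MonoidAlgebra.single g (1 : R) : MonoidAlgebra R G) • m)) ∧
      (∀ (x : (P →ₗ[R] R) ⊗[R] M) (g : G) (p : P),
        T x ((MonoidAlgebra.single g (1 : R) : MonoidAlgebra R G) • p) =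
          (MonoidAlgebra.single g (1 : R) : MonoidAlgebra R G) • T x p) ∧
      (∀ φ : P →ₗ[R] M,
        (∀ (g : G) (p : P),
          φ ((MonoidAlgebra.single g (1 : R) : MonoidAlgebra R G) • p) =
            (MonoidAlgebra.single g (1 : R) : MonoidAlgebra R G) • φ p) →
        ∃ x, T x = φ) ∧
      LinearMap.ker T = Submodule.span R
        {z : (P →ₗ[R] R) ⊗[R] M | ∃ (f : P →ₗ[R] R) (m : M) (g : G),
          z = (f ∘ₗ gAct R G P g) ⊗ₜ m -
            f ⊗ₜ ((MonoidAlgebra.single g (1 : R) : MonoidAlgebra R G) • m)} := by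
  classical
  obtain ⟨n, s, F, hF⟩ := exists_dual_basis (MonoidAlgebra R G) P
  set T : ((P →ₗ[R] R) ⊗[R] M) →ₗ[R] (P →ₗ[R] M) := TensorProduct.lift (Bmap R G P M)
    with hTdef
  have hform : ∀ (f : P →ₗ[R] R) (m : M) (p : P),
      T (f ⊗ₜ m) p = ∑ g : G,
        f ((MonoidAlgebra.single g⁻¹ (1 : R) : MonoidAlgebra R G) • p) •
          ((MonoidAlgebra.single g (1 : R) : MonoidAlgebra R G) • m) := by
    intro f m p
    simp only [hTdef, TensorProduct.lift.tmul]
    exact Bmap_apply R G P M f m p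
  have hequi : ∀ (x : (P →ₗ[R] R) ⊗[R] M) (g : G) (p : P),
      T x ((MonoidAlgebra.single g (1 : R) : MonoidAlgebra R G) • p) =
        (MonoidAlgebra.single g (1 : R) : MonoidAlgebra R G) • T x p := by
    intro x g p
    induction x using TensorProduct.induction_on with
    | zero => simp
    | tmul f m =>
      rw [hform, hform, Finset.smul_sum]
      refine Eq.trans (Equiv.sum_comp (Equiv.mulLeft g)
        (fun h => f ((MonoidAlgebra.single h⁻¹ (1 : R) : MonoidAlgebra R G) •
          ((MonoidAlgebra.single g (1 : R) : MonoidAlgebra R G) • p)) •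
          ((MonoidAlgebra.single h (1 : R) : MonoidAlgebra R G) • m))).symm
        (Finset.sum_congr rfl fun h _ => ?_)
      simp only [Equiv.coe_mulLeft]
      rw [single_smul_single R G P, ← single_smul_single R G M g h m]
      have hgh : (g * h)⁻¹ * g = h⁻¹ := by group
      rw [hgh]
      exact smul_comm _ _ _
    | add a b ha hb =>
      rw [map_add, LinearMap.add_apply, LinearMap.add_apply, ha, hb, smul_add]
  set fi : Fin n → (P →ₗ[R] R) :=
    fun i => (coeff1 R G) ∘ₗ ((F i).restrictScalars R) with hfidef
  have hfi : ∀ (i : Fin n) (g : G) (p : P),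
      fi i ((MonoidAlgebra.single g (1 : R) : MonoidAlgebra R G) • p) = (F i p).coeff g⁻¹ :=
    fun i g p => coeff1_map R G P (F i) g p
  have hsur : ∀ φ : P →ₗ[R] M,
      (∀ (g : G) (p : P),
        φ ((MonoidAlgebra.single g (1 : R) : MonoidAlgebra R G) • p) =
          (MonoidAlgebra.single g (1 : R) : MonoidAlgebra R G) • φ p) →
      ∃ x, T x = φ := by
    intro φ hφ
    refine ⟨∑ i, fi i ⊗ₜ φ (s i), ?_⟩
    ext p
    rw [map_sum, LinearMap.sum_apply]
    have h1 : ∀ i, T (fi i ⊗ₜ φ (s i)) p = φ ((F i p) • s i) := by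
      intro i
      rw [hform]
      have hterm : ∀ g : G,
          fi i ((MonoidAlgebra.single g⁻¹ (1 : R) : MonoidAlgebra R G) • p) •
            ((MonoidAlgebra.single g (1 : R) : MonoidAlgebra R G) • φ (s i)) =
          φ ((F i p).coeff g • ((MonoidAlgebra.single g (1 : R) : MonoidAlgebra R G) • s i)) := by
        intro g
        rw [hfi, inv_inv, ← hφ, ← map_smul]
      rw [Finset.sum_congr rfl fun g _ => hterm g, ← map_sum, ← smul_decomp]
    rw [Finset.sum_congr rfl fun i _ => h1 i, ← map_sum, hF]
  have claim1 : ∀ f : P →ₗ[R] R,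
      ∑ i, ∑ g : G, f ((MonoidAlgebra.single g⁻¹ (1 : R) : MonoidAlgebra R G) • s i) •
        (fi i ∘ₗ gAct R G P g) = f := by
    intro f
    ext p
    rw [LinearMap.sum_apply]
    have h2 : ∀ i, ((∑ g : G,
        f ((MonoidAlgebra.single g⁻¹ (1 : R) : MonoidAlgebra R G) • s i) •
          (fi i ∘ₗ gAct R G P g)) : P →ₗ[R] R) p = f ((F i p) • s i) := by
      intro i
      rw [LinearMap.sum_apply]
      have hterm : ∀ g : G,
          (f ((MonoidAlgebra.single g⁻¹ (1 : R) : MonoidAlgebra R G) • s i) •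
            (fi i ∘ₗ gAct R G P g)) p =
          f ((F i p).coeff g⁻¹ • ((MonoidAlgebra.single g⁻¹ (1 : R) : MonoidAlgebra R G) • s i)) := by
        intro g
        rw [LinearMap.smul_apply, LinearMap.comp_apply]
        have hg : fi i (gAct R G P g p) = (F i p).coeff g⁻¹ := hfi i g p
        rw [hg, smul_eq_mul, mul_comm, ← smul_eq_mul, ← map_smul]
      rw [Finset.sum_congr rfl fun g _ => hterm g]
      rw [← Equiv.sum_comp (Equiv.inv G)
        (fun g => f ((F i p).coeff g⁻¹ •
          ((MonoidAlgebra.single g⁻¹ (1 : R) : MonoidAlgebra R G) • s i)))]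
      simp only [Equiv.inv_apply, inv_inv]
      rw [← map_sum, ← smul_decomp]
    rw [Finset.sum_congr rfl fun i _ => h2 i, ← map_sum, hF]
  have key : ∀ (f : P →ₗ[R] R) (m : M),
      f ⊗ₜ[R] m - ∑ i, fi i ⊗ₜ[R] (T (f ⊗ₜ[R] m) (s i)) =
      ∑ i, ∑ g : G, f ((MonoidAlgebra.single g⁻¹ (1 : R) : MonoidAlgebra R G) • s i) •
        ((fi i ∘ₗ gAct R G P g) ⊗ₜ[R] m -
          fi i ⊗ₜ[R] ((MonoidAlgebra.single g (1 : R) : MonoidAlgebra R G) • m)) := by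
    intro f m
    have e1 : ∑ i, ∑ g : G,
        f ((MonoidAlgebra.single g⁻¹ (1 : R) : MonoidAlgebra R G) • s i) •
          ((fi i ∘ₗ gAct R G P g) ⊗ₜ[R] m) = f ⊗ₜ[R] m := by
      conv_rhs => rw [← claim1 f]
      rw [sum_tmul]
      refine Finset.sum_congr rfl fun i _ => ?_
      rw [sum_tmul]
      exact Finset.sum_congr rfl fun g _ => (smul_tmul' _ _ _).symm
    have e2 : ∑ i, ∑ g : G,
        f ((MonoidAlgebra.single g⁻¹ (1 : R) : MonoidAlgebra R G) • s i) •
          (fi i ⊗ₜ[R] ((MonoidAlgebra.single g (1 : R) : MonoidAlgebra R G) • m)) =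
        ∑ i, fi i ⊗ₜ[R] (T (f ⊗ₜ[R] m) (s i)) := by
      refine Finset.sum_congr rfl fun i _ => ?_
      rw [hform, tmul_sum]
      exact Finset.sum_congr rfl fun g _ => (tmul_smul _ _ _).symm
    simp only [smul_sub]
    refine Eq.trans ?_ (Finset.sum_congr rfl fun i _ => (Finset.sum_sub_distrib
      (fun g => f ((MonoidAlgebra.single g⁻¹ (1 : R) : MonoidAlgebra R G) • s i) •
        ((fi i ∘ₗ gAct R G P g) ⊗ₜ[R] m))
      (fun g => f ((MonoidAlgebra.single g⁻¹ (1 : R) : MonoidAlgebra R G) • s i) •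
        (fi i ⊗ₜ[R] ((MonoidAlgebra.single g (1 : R) : MonoidAlgebra R G) • m)))).symm)
    refine Eq.trans ?_ (Finset.sum_sub_distrib _ _).symm
    rw [e1, e2]
  have hsub : ∀ x : (P →ₗ[R] R) ⊗[R] M,
      x - ∑ i, fi i ⊗ₜ[R] (T x (s i)) ∈ Submodule.span R
        {z : (P →ₗ[R] R) ⊗[R] M | ∃ (f : P →ₗ[R] R) (m : M) (g : G),
          z = (f ∘ₗ gAct R G P g) ⊗ₜ m -
            f ⊗ₜ ((MonoidAlgebra.single g (1 : R) : MonoidAlgebra R G) • m)} := by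
    intro x
    induction x using TensorProduct.induction_on with
    | zero => simp
    | tmul f m =>
      rw [key f m]
      exact Submodule.sum_mem _ fun i _ => Submodule.sum_mem _ fun g _ =>
        Submodule.smul_mem _ _ (Submodule.subset_span ⟨fi i, m, g, rfl⟩)
    | add a b ha hb =>
      have hsplit : (a + b) - ∑ i, fi i ⊗ₜ[R] (T (a + b) (s i)) =
          (a - ∑ i, fi i ⊗ₜ[R] (T a (s i))) + (b - ∑ i, fi i ⊗ₜ[R] (T b (s i))) := by
        rw [map_add]
        simp only [LinearMap.add_apply, tmul_add, Finset.sum_add_distrib]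
        abel
      rw [hsplit]
      exact Submodule.add_mem _ ha hb
  refine ⟨T, hform, hequi, hsur, le_antisymm ?_ ?_⟩
  · intro x hx
    have h := hsub x
    rw [LinearMap.mem_ker] at hx
    simp [hx] at h
    exact (sub_zero x) ▸ h
  · rw [Submodule.span_le]
    rintro z ⟨f, m, g, rfl⟩
    rw [SetLike.mem_coe, LinearMap.mem_ker, map_sub, sub_eq_zero]
    ext p
    rw [hform, hform]
    refine Eq.trans (Equiv.sum_comp (Equiv.mulRight g)
      (fun h => (f ∘ₗ gAct R G P g)
        ((MonoidAlgebra.single h⁻¹ (1 : R) : MonoidAlgebra R G) • p) •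
        ((MonoidAlgebra.single h (1 : R) : MonoidAlgebra R G) • m))).symm
      (Finset.sum_congr rfl fun h _ => ?_)
    simp only [Equiv.coe_mulRight, LinearMap.comp_apply]
    have hact : gAct R G P g ((MonoidAlgebra.single (h * g)⁻¹ (1 : R) : MonoidAlgebra R G) • p)
        = (MonoidAlgebra.single g (1 : R) : MonoidAlgebra R G) •
          ((MonoidAlgebra.single (h * g)⁻¹ (1 : R) : MonoidAlgebra R G) • p) := rfl
    rw [hact, single_smul_single R G P, ← single_smul_single R G M h g m]
    have hgh : g * (h * g)⁻¹ = h⁻¹ := by group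
    rw [hgh]
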